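/- arXiv:2211.08448 — 2 statements merged into one kernel-verified Lean document; each statement's English description precedes it below -/
import Mathlib

section
/- There do not exist operators G_i^j (for an SU(N) with N ≥ 2) acting on the N²-spin system such that [G_i^j, S_k^{l±}] = δ_i^l S_k^{j±} − δ_k^j S_i^{l±} is consistent with the Jacobi identity and the spin algebra relation [S^{i+}_k, S^{k−}_j] = 2δ-weighted S^z terms; concretely, the identity Σ_k [[S^{i+}_k, S^{k−}_j], S^{l+}_h] = δ^i_j δ^j_h S^{l+}_h (which follows from the spin algebra with the stated transformation law) has left and right sides transforming inconsistently, yielding a contradiction for N ≥ 2. -/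
private lemma jac_aux {A : Type*} [Ring A] (a x y : A) :
    (a*x - x*a)*y - y*(a*x - x*a) + (x*(a*y - y*a) - (a*y - y*a)*x)
      = a*(x*y - y*x) - (x*y - y*x)*a := by noncomm_ring

/-- for `N ≥ 2` there are no operators `G_i^j` implementing the adjoint
`SU(N)` action `[G_i^j, S_k^{l±}] = δ_i^l S_k^{j±} − δ_k^j S_i^{l±}` (and commuting with
the `S^z`'s) consistently with the `su(2)` algebra of the `N²` nontrivial spins. -/
theorem statement13 (N : ℕ) (hN : 2 ≤ N) (A : Type*) [Ring A] [Algebra ℂ A]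
    (Sp Sm Sz G : Fin N → Fin N → A)
    (h1 : ∀ i j, Sp i j * Sm j i - Sm j i * Sp i j = (2 : ℂ) • Sz i j)
    (h2 : ∀ i j, Sz i j * Sp i j - Sp i j * Sz i j = Sp i j)
    (h3 : ∀ i j, Sz i j * Sm j i - Sm j i * Sz i j = -(Sm j i))
    (hsites : ∀ i j k l : Fin N, (i, j) ≠ (k, l) →
      Commute (Sp i j) (Sp k l) ∧ Commute (Sp i j) (Sm l k) ∧
      Commute (Sp i j) (Sz k l) ∧ Commute (Sm j i) (Sm l k) ∧
      Commute (Sm j i) (Sz k l) ∧ Commute (Sz i j) (Sz k l))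
    (hGp : ∀ i j k l, G i j * Sp k l - Sp k l * G i j =
      (if i = l then (1 : ℂ) else 0) • Sp k j - (if k = j then (1 : ℂ) else 0) • Sp i l)
    (hGm : ∀ i j k l, G i j * Sm k l - Sm k l * G i j =
      (if i = l then (1 : ℂ) else 0) • Sm k j - (if k = j then (1 : ℂ) else 0) • Sm i l)
    (hGz : ∀ i j k l, G i j * Sz k l - Sz k l * G i j = 0)
    (hnt : ∀ i j, Sp i j ≠ 0) :
    False := by
  set z : Fin N := ⟨0, by omega⟩ with hz
  set o : Fin N := ⟨1, by omega⟩ with ho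
  have hzo : z ≠ o := by simp [hz, ho, Fin.ext_iff]
  -- relevant commutations at distinct sites
  have c1 : Commute (Sp z o) (Sm z z) := (hsites z o z z (by simp [hz, ho, Prod.ext_iff, Fin.ext_iff])).2.1
  have c2 : Commute (Sp o o) (Sm z z) := (hsites o o z z (by simp [hz, ho, Prod.ext_iff, Fin.ext_iff])).2.1
  have c3 : Commute (Sp z z) (Sz z o) := (hsites z z z o (by simp [hz, ho, Prod.ext_iff, Fin.ext_iff])).2.2.1
  -- G-commutators
  have gp : G o z * Sp z o - Sp z o * G o z = Sp z z - Sp o o := by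
    have h := hGp o z z o
    rw [if_pos rfl, if_pos rfl, one_smul, one_smul] at h
    exact h
  have gm : G o z * Sm z z - Sm z z * G o z = -(Sm o z) := by
    have h := hGm o z z z
    rw [if_neg (Ne.symm hzo), if_pos rfl, zero_smul, one_smul, zero_sub] at h
    exact h
  -- Jacobi identity with a = G o z, x = Sp z o, y = Sm z z
  have jac := jac_aux (G o z) (Sp z o) (Sm z z)
  rw [gp, gm, c1.eq] at jac
  simp only [sub_self, mul_zero, zero_mul, sub_zero] at jac
  -- expand: (Spzz - Spoo)*Y - Y*(Spzz - Spoo) + (X*(-Smoz) - (-Smoz)*X) = 0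
  have key : (2 : ℂ) • Sz z z - (2 : ℂ) • Sz z o = 0 := by
    rw [← h1 z z, ← h1 z o]
    calc Sp z z * Sm z z - Sm z z * Sp z z - (Sp z o * Sm o z - Sm o z * Sp z o)
        = ((Sp z z - Sp o o) * Sm z z - Sm z z * (Sp z z - Sp o o)
            + (Sp z o * -(Sm o z) - -(Sm o z) * Sp z o))
          + (Sp o o * Sm z z - Sm z z * Sp o o) := by noncomm_ring
      _ = 0 := by rw [jac, c2.eq]; simp
  have hSz : Sz z z = Sz z o := by
    have h2ne : (2 : ℂ) ≠ 0 := two_ne_zero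
    have := sub_eq_zero.mp key
    exact smul_right_injective A h2ne this
  have : Sp z z = 0 := by
    have := h2 z z
    rw [hSz] at this
    rw [← this, c3.symm.eq, sub_self]
  exact hnt z z this
end

section
/- For N² mutually commuting spin-1/2 systems with collective raising operators Tr(S⁺^n) (cyclic traces in matrix indices), the state identity Tr(S⁻²)Tr(S⁺²)Tr(S⁺²)|0⟩ = (4N² − 4N − 8)Tr(S⁺²)|0⟩ + 32 Σ_i S^{i+}_i S^{i+}_i |0⟩ holds, where |0⟩ is the all-spins-down state. In particular, for spin-1/2 (where (S^{i+}_i)² = 0), Tr(S⁻²)Tr(S⁺²)Tr(S⁺²)|0⟩ = (4N² − 4N − 8)Tr(S⁺²)|0⟩. -/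
/-- `Tr(S⁺²) = Σ_{i,j} S^{i+}_j S^{j+}_i` (with `Sp a b = S_a^{b+}`). -/
noncomputable def trSq {H : Type*} [AddCommGroup H] [Module ℂ H] {N : ℕ}
    (Sp : Fin N → Fin N → Module.End ℂ H) : Module.End ℂ H :=
  ∑ i : Fin N, ∑ j : Fin N, Sp i j * Sp j i

/-- for `N²` spin systems with all spins down in `|0⟩`,
`Tr(S⁻²)Tr(S⁺²)Tr(S⁺²)|0⟩ = (4N²−4N−8) Tr(S⁺²)|0⟩ + 32 Σ_i S^{i+}_i S^{i+}_i |0⟩`;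
in particular for spin-1/2, where `(S^{i+}_i)² = 0`, the last term drops out. -/
theorem statement15 (N : ℕ) (H : Type*) [AddCommGroup H] [Module ℂ H]
    (Sp Sm Sz : Fin N → Fin N → Module.End ℂ H) (v : H)
    (h1 : ∀ i j, Sp i j * Sm j i - Sm j i * Sp i j = (2 : ℂ) • Sz i j)
    (h2 : ∀ i j, Sz i j * Sp i j - Sp i j * Sz i j = Sp i j)
    (h3 : ∀ i j, Sz i j * Sm j i - Sm j i * Sz i j = -(Sm j i))
    (hsites : ∀ i j k l : Fin N, (i, j) ≠ (k, l) →
      Commute (Sp i j) (Sp k l) ∧ Commute (Sp i j) (Sm l k) ∧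
      Commute (Sp i j) (Sz k l) ∧ Commute (Sm j i) (Sm l k) ∧
      Commute (Sm j i) (Sz k l) ∧ Commute (Sz i j) (Sz k l))
    (hvac : ∀ i j, Sm i j v = 0)
    (hz : ∀ i j, Sz i j v = (-(1 / 2) : ℂ) • v) :
    (trSq Sm * trSq Sp * trSq Sp) v =
      ((4 * (N : ℂ) ^ 2 - 4 * N - 8) : ℂ) • (trSq Sp v) +
        (32 : ℂ) • ((∑ i : Fin N, Sp i i * Sp i i) v) ∧
    ((∀ i : Fin N, Sp i i * Sp i i = 0) →
      (trSq Sm * trSq Sp * trSq Sp) v =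
        ((4 * (N : ℂ) ^ 2 - 4 * N - 8) : ℂ) • (trSq Sp v)) := by
  -- operator rearrangements of the defining relations
  have fop : ∀ i j, Sm j i * Sp i j = Sp i j * Sm j i - (2:ℂ) • Sz i j := by
    intro i j
    have h : Sm j i * Sp i j
        = Sp i j * Sm j i - (Sp i j * Sm j i - Sm j i * Sp i j) := by abel
    rw [h, h1 i j]
  have hop : ∀ i j, Sz i j * Sp i j = Sp i j * Sz i j + Sp i j := by
    intro i j
    have h : Sz i j * Sp i j
        = Sp i j * Sz i j + (Sz i j * Sp i j - Sp i j * Sz i j) := by abel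
    rw [h, h2 i j]
  have fhop : ∀ i j, Sm j i * Sz i j = Sz i j * Sm j i + Sm j i := by
    intro i j
    have h : Sm j i * Sz i j
        = Sz i j * Sm j i - (Sz i j * Sm j i - Sm j i * Sz i j) := by abel
    rw [h, h3 i j]; abel
  -- vector-level step lemmas
  have sw : ∀ {X Y : Module.End ℂ H}, X * Y = Y * X → ∀ w : H, X (Y w) = Y (X w) := by
    intro X Y h w
    have := congrArg (fun T : Module.End ℂ H => T w) h
    simpa using this
  have fstepv : ∀ i j (w : H),
      Sm j i (Sp i j w) = Sp i j (Sm j i w) - (2:ℂ) • Sz i j w := by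
    intro i j w
    have := congrArg (fun T : Module.End ℂ H => T w) (fop i j)
    simpa using this
  have hstepv : ∀ i j (w : H),
      Sz i j (Sp i j w) = Sp i j (Sz i j w) + Sp i j w := by
    intro i j w
    have := congrArg (fun T : Module.End ℂ H => T w) (hop i j)
    simpa using this
  have fhstepv : ∀ i j (w : H),
      Sm j i (Sz i j w) = Sz i j (Sm j i w) + Sm j i w := by
    intro i j w
    have := congrArg (fun T : Module.End ℂ H => T w) (fhop i j)
    simpa using this
  have fev : ∀ i j, Sm j i (Sp i j v) = v := by
    intro i j
    rw [fstepv, hvac, hz, map_zero]; module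
  have hev : ∀ i j, Sz i j (Sp i j v) = (1/2 : ℂ) • Sp i j v := by
    intro i j
    rw [hstepv, hz, map_smul]; module
  -- generic commutator-with-trSq lemma
  have comm_gen : ∀ (X : Module.End ℂ H) (i j : Fin N),
      (∀ a b, (a,b) ≠ (i,j) → Commute X (Sp a b)) →
      X * trSq Sp - trSq Sp * X =
        (X * (Sp i j * Sp j i) - (Sp i j * Sp j i) * X) +
        (if i = j then 0 else X * (Sp j i * Sp i j) - (Sp j i * Sp i j) * X) := by
    intro X i j hcom
    set g : Fin N × Fin N → Module.End ℂ H :=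
      fun p => X * (Sp p.1 p.2 * Sp p.2 p.1) - (Sp p.1 p.2 * Sp p.2 p.1) * X with hg
    have expand : X * trSq Sp - trSq Sp * X = ∑ p : Fin N × Fin N, g p := by
      rw [trSq, ← Finset.sum_product', Finset.univ_product_univ, Finset.mul_sum,
        Finset.sum_mul, ← Finset.sum_sub_distrib]
    have hzero : ∀ p ∈ (Finset.univ : Finset (Fin N × Fin N)),
        p ∉ ({(i,j),(j,i)} : Finset (Fin N × Fin N)) → g p = 0 := by
      intro p _ hp
      simp only [Finset.mem_insert, Finset.mem_singleton] at hp
      push_neg at hp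
      have c1 : Commute X (Sp p.1 p.2) := hcom p.1 p.2 (by
        intro h; rw [Prod.ext_iff] at h; exact hp.1 (Prod.ext_iff.mpr ⟨h.1, h.2⟩))
      have c2 : Commute X (Sp p.2 p.1) := hcom p.2 p.1 (by
        intro h; rw [Prod.ext_iff] at h; exact hp.2 (Prod.ext_iff.mpr ⟨h.2, h.1⟩))
      exact sub_eq_zero.mpr (c1.mul_right c2).eq
    have reduce : ∑ p : Fin N × Fin N, g p
        = ∑ p ∈ ({(i,j),(j,i)} : Finset (Fin N × Fin N)), g p :=
      (Finset.sum_subset (Finset.subset_univ _) hzero).symm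
    rw [expand, reduce]
    by_cases hij : i = j
    · subst hij
      rw [if_pos rfl, add_zero]
      have hs : ({(i,i),(i,i)} : Finset (Fin N × Fin N)) = {(i,i)} := by simp
      rw [hs, Finset.sum_singleton]
    · rw [if_neg hij, Finset.sum_pair (by
        simp only [ne_eq, Prod.mk.injEq, not_and]
        intro h; exact absurd h hij)]
  -- commutator of Sm with trSq Sp
  have comm_FA : ∀ i j, Sm j i * trSq Sp = trSq Sp * Sm j i
      - (2:ℂ) • (Sz i j * Sp j i) - (2:ℂ) • (Sp j i * Sz i j) := by
    intro i j
    have hcom : ∀ a b, (a,b) ≠ (i,j) → Commute (Sm j i) (Sp a b) :=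
      fun a b hab => ((hsites a b i j hab).2.1).symm
    have hg := comm_gen (Sm j i) i j hcom
    have hB : (Sm j i * (Sp i j * Sp j i) - (Sp i j * Sp j i) * Sm j i) +
        (if i = j then 0 else Sm j i * (Sp j i * Sp i j) - (Sp j i * Sp i j) * Sm j i)
        = -((2:ℂ) • (Sz i j * Sp j i)) - (2:ℂ) • (Sp j i * Sz i j) := by
      by_cases hij : i = j
      · subst hij
        rw [if_pos rfl, add_zero]
        calc Sm i i * (Sp i i * Sp i i) - (Sp i i * Sp i i) * Sm i i
            = (Sm i i * Sp i i) * Sp i i - (Sp i i * Sp i i) * Sm i i := by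
              rw [← mul_assoc (Sm i i) (Sp i i) (Sp i i)]
          _ = (Sp i i * Sm i i - (2:ℂ) • Sz i i) * Sp i i
                - (Sp i i * Sp i i) * Sm i i := by rw [fop i i]
          _ = Sp i i * (Sm i i * Sp i i) - (2:ℂ) • (Sz i i * Sp i i)
                - (Sp i i * Sp i i) * Sm i i := by
              rw [sub_mul, smul_mul_assoc, mul_assoc (Sp i i) (Sm i i) (Sp i i)]
          _ = Sp i i * (Sp i i * Sm i i - (2:ℂ) • Sz i i) - (2:ℂ) • (Sz i i * Sp i i)
                - (Sp i i * Sp i i) * Sm i i := by rw [fop i i]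
          _ = (Sp i i * Sp i i) * Sm i i - (2:ℂ) • (Sp i i * Sz i i)
                - (2:ℂ) • (Sz i i * Sp i i) - (Sp i i * Sp i i) * Sm i i := by
              rw [mul_sub, mul_smul_comm, ← mul_assoc]
          _ = -((2:ℂ) • (Sz i i * Sp i i)) - (2:ℂ) • (Sp i i * Sz i i) := by abel
      · rw [if_neg hij]
        have hne' : ((j,i) : Fin N × Fin N) ≠ (i,j) := by
          simp only [ne_eq, Prod.mk.injEq, not_and]
          intro h; exact absurd h.symm hij
        have cfe : Sm j i * Sp j i = Sp j i * Sm j i :=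
          ((hsites j i i j hne').2.1).symm.eq
        have p1 : Sm j i * (Sp i j * Sp j i) - (Sp i j * Sp j i) * Sm j i
            = -((2:ℂ) • (Sz i j * Sp j i)) := by
          calc Sm j i * (Sp i j * Sp j i) - (Sp i j * Sp j i) * Sm j i
              = (Sm j i * Sp i j) * Sp j i - (Sp i j * Sp j i) * Sm j i := by
                rw [← mul_assoc (Sm j i) (Sp i j) (Sp j i)]
            _ = (Sp i j * Sm j i - (2:ℂ) • Sz i j) * Sp j i
                  - (Sp i j * Sp j i) * Sm j i := by rw [fop i j]
            _ = Sp i j * (Sm j i * Sp j i) - (2:ℂ) • (Sz i j * Sp j i)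
                  - (Sp i j * Sp j i) * Sm j i := by
                rw [sub_mul, smul_mul_assoc, mul_assoc (Sp i j) (Sm j i) (Sp j i)]
            _ = (Sp i j * Sp j i) * Sm j i - (2:ℂ) • (Sz i j * Sp j i)
                  - (Sp i j * Sp j i) * Sm j i := by rw [cfe, ← mul_assoc]
            _ = -((2:ℂ) • (Sz i j * Sp j i)) := by abel
        have p2 : Sm j i * (Sp j i * Sp i j) - (Sp j i * Sp i j) * Sm j i
            = -((2:ℂ) • (Sp j i * Sz i j)) := by
          calc Sm j i * (Sp j i * Sp i j) - (Sp j i * Sp i j) * Sm j i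
              = (Sm j i * Sp j i) * Sp i j - (Sp j i * Sp i j) * Sm j i := by
                rw [← mul_assoc (Sm j i) (Sp j i) (Sp i j)]
            _ = (Sp j i * Sm j i) * Sp i j - (Sp j i * Sp i j) * Sm j i := by rw [cfe]
            _ = Sp j i * (Sm j i * Sp i j) - (Sp j i * Sp i j) * Sm j i := by
                rw [mul_assoc (Sp j i) (Sm j i) (Sp i j)]
            _ = Sp j i * (Sp i j * Sm j i - (2:ℂ) • Sz i j)
                  - (Sp j i * Sp i j) * Sm j i := by rw [fop i j]
            _ = (Sp j i * Sp i j) * Sm j i - (2:ℂ) • (Sp j i * Sz i j)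
                  - (Sp j i * Sp i j) * Sm j i := by
                rw [mul_sub, mul_smul_comm, ← mul_assoc]
            _ = -((2:ℂ) • (Sp j i * Sz i j)) := by abel
        rw [p1, p2]; abel
    rw [hB] at hg
    have : Sm j i * trSq Sp
        = trSq Sp * Sm j i + (Sm j i * trSq Sp - trSq Sp * Sm j i) := by abel
    rw [this, hg]; abel
  -- commutator of Sz with trSq Sp
  have comm_HA : ∀ i j, Sz i j * trSq Sp = trSq Sp * Sz i j
      + Sp i j * Sp j i + Sp j i * Sp i j := by
    intro i j
    have hcom : ∀ a b, (a,b) ≠ (i,j) → Commute (Sz i j) (Sp a b) :=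
      fun a b hab => ((hsites a b i j hab).2.2.1).symm
    have hg := comm_gen (Sz i j) i j hcom
    have hB : (Sz i j * (Sp i j * Sp j i) - (Sp i j * Sp j i) * Sz i j) +
        (if i = j then 0 else Sz i j * (Sp j i * Sp i j) - (Sp j i * Sp i j) * Sz i j)
        = Sp i j * Sp j i + Sp j i * Sp i j := by
      by_cases hij : i = j
      · subst hij
        rw [if_pos rfl, add_zero]
        calc Sz i i * (Sp i i * Sp i i) - (Sp i i * Sp i i) * Sz i i
            = (Sz i i * Sp i i) * Sp i i - (Sp i i * Sp i i) * Sz i i := by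
              rw [← mul_assoc (Sz i i) (Sp i i) (Sp i i)]
          _ = (Sp i i * Sz i i + Sp i i) * Sp i i - (Sp i i * Sp i i) * Sz i i := by
              rw [hop i i]
          _ = Sp i i * (Sz i i * Sp i i) + Sp i i * Sp i i
                - (Sp i i * Sp i i) * Sz i i := by
              rw [add_mul, mul_assoc (Sp i i) (Sz i i) (Sp i i)]
          _ = Sp i i * (Sp i i * Sz i i + Sp i i) + Sp i i * Sp i i
                - (Sp i i * Sp i i) * Sz i i := by rw [hop i i]
          _ = (Sp i i * Sp i i) * Sz i i + Sp i i * Sp i i + Sp i i * Sp i i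
                - (Sp i i * Sp i i) * Sz i i := by rw [mul_add, ← mul_assoc]
          _ = Sp i i * Sp i i + Sp i i * Sp i i := by abel
      · rw [if_neg hij]
        have hne' : ((j,i) : Fin N × Fin N) ≠ (i,j) := by
          simp only [ne_eq, Prod.mk.injEq, not_and]
          intro h; exact absurd h.symm hij
        have che : Sz i j * Sp j i = Sp j i * Sz i j :=
          ((hsites j i i j hne').2.2.1).symm.eq
        have p1 : Sz i j * (Sp i j * Sp j i) - (Sp i j * Sp j i) * Sz i j
            = Sp i j * Sp j i := by
          calc Sz i j * (Sp i j * Sp j i) - (Sp i j * Sp j i) * Sz i j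
              = (Sz i j * Sp i j) * Sp j i - (Sp i j * Sp j i) * Sz i j := by
                rw [← mul_assoc (Sz i j) (Sp i j) (Sp j i)]
            _ = (Sp i j * Sz i j + Sp i j) * Sp j i - (Sp i j * Sp j i) * Sz i j := by
                rw [hop i j]
            _ = Sp i j * (Sz i j * Sp j i) + Sp i j * Sp j i
                  - (Sp i j * Sp j i) * Sz i j := by
                rw [add_mul, mul_assoc (Sp i j) (Sz i j) (Sp j i)]
            _ = (Sp i j * Sp j i) * Sz i j + Sp i j * Sp j i
                  - (Sp i j * Sp j i) * Sz i j := by rw [che, ← mul_assoc]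
            _ = Sp i j * Sp j i := by abel
        have p2 : Sz i j * (Sp j i * Sp i j) - (Sp j i * Sp i j) * Sz i j
            = Sp j i * Sp i j := by
          calc Sz i j * (Sp j i * Sp i j) - (Sp j i * Sp i j) * Sz i j
              = (Sz i j * Sp j i) * Sp i j - (Sp j i * Sp i j) * Sz i j := by
                rw [← mul_assoc (Sz i j) (Sp j i) (Sp i j)]
            _ = (Sp j i * Sz i j) * Sp i j - (Sp j i * Sp i j) * Sz i j := by rw [che]
            _ = Sp j i * (Sz i j * Sp i j) - (Sp j i * Sp i j) * Sz i j := by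
                rw [mul_assoc (Sp j i) (Sz i j) (Sp i j)]
            _ = Sp j i * (Sp i j * Sz i j + Sp i j) - (Sp j i * Sp i j) * Sz i j := by
                rw [hop i j]
            _ = (Sp j i * Sp i j) * Sz i j + Sp j i * Sp i j
                  - (Sp j i * Sp i j) * Sz i j := by rw [mul_add, ← mul_assoc]
            _ = Sp j i * Sp i j := by abel
        rw [p1, p2]
    rw [hB] at hg
    have : Sz i j * trSq Sp
        = trSq Sp * Sz i j + (Sz i j * trSq Sp - trSq Sp * Sz i j) := by abel
    rw [this, hg]; abel
  -- vector versions
  have appFA : ∀ i j (w : H), Sm j i (trSq Sp w) = trSq Sp (Sm j i w)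
      - (2:ℂ) • (Sz i j (Sp j i w)) - (2:ℂ) • (Sp j i (Sz i j w)) := by
    intro i j w
    have := congrArg (fun T : Module.End ℂ H => T w) (comm_FA i j)
    simpa using this
  have appHA : ∀ i j (w : H), Sz i j (trSq Sp w) = trSq Sp (Sz i j w)
      + Sp i j (Sp j i w) + Sp j i (Sp i j w) := by
    intro i j w
    have := congrArg (fun T : Module.End ℂ H => T w) (comm_HA i j)
    simpa using this
  -- the diagonal term
  have diag : ∀ i : Fin N, Sm i i (Sm i i (trSq Sp (trSq Sp v)))
      = (24:ℂ) • (Sp i i (Sp i i v)) := by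
    intro i
    have fAd : Sm i i (trSq Sp v) = 0 := by
      rw [appFA i i v, hvac, map_zero, hev i i, hz, map_smul]
      module
    have hAd : Sz i i (trSq Sp v)
        = (-(1/2):ℂ) • trSq Sp v + (2:ℂ) • Sp i i (Sp i i v) := by
      rw [appHA i i v, hz, map_smul]; module
    have heevd : Sz i i (Sp i i (Sp i i v)) = (3/2:ℂ) • Sp i i (Sp i i v) := by
      rw [hstepv i i, hev i i, map_smul]; module
    have hhAd : Sz i i (Sz i i (trSq Sp v))
        = (1/4:ℂ) • trSq Sp v + (2:ℂ) • Sp i i (Sp i i v) := by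
      rw [hAd, map_add, map_smul, map_smul, hAd, heevd]; module
    have feAd : Sm i i (Sp i i (trSq Sp v))
        = trSq Sp v - (4:ℂ) • Sp i i (Sp i i v) := by
      rw [fstepv i i, fAd, map_zero, hAd]; module
    have inner : Sm i i (trSq Sp (trSq Sp v))
        = -((2:ℂ) • (Sz i i (Sp i i (trSq Sp v))))
          - (2:ℂ) • (Sp i i (Sz i i (trSq Sp v))) := by
      rw [appFA i i (trSq Sp v), fAd, map_zero]; abel
    have V1 : Sm i i (Sz i i (Sp i i (trSq Sp v)))
        = (1/2:ℂ) • trSq Sp v - (8:ℂ) • Sp i i (Sp i i v) := by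
      rw [fhstepv i i, feAd, map_sub, map_smul, hAd, heevd]; module
    have fhAd : Sm i i (Sz i i (trSq Sp v)) = 0 := by
      rw [fhstepv i i, fAd, map_zero]; simp
    have V2 : Sm i i (Sp i i (Sz i i (trSq Sp v)))
        = -((1/2:ℂ) • trSq Sp v) - (4:ℂ) • Sp i i (Sp i i v) := by
      rw [fstepv i i, fhAd, map_zero, hhAd]; module
    rw [inner, map_sub, map_neg, map_smul, map_smul, V1, V2]
    module
  -- the off-diagonal term
  have offd : ∀ i j : Fin N, i ≠ j → Sm i j (Sm j i (trSq Sp (trSq Sp v)))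
      = (4:ℂ) • trSq Sp v - (8:ℂ) • (Sp i j (Sp j i v)) := by
    intro i j hij
    have hne : ((i,j) : Fin N × Fin N) ≠ (j,i) := by
      simp only [ne_eq, Prod.mk.injEq, not_and]
      intro h; exact absurd h hij
    have hne' : ((j,i) : Fin N × Fin N) ≠ (i,j) := by
      simp only [ne_eq, Prod.mk.injEq, not_and]
      intro h; exact absurd h.symm hij
    have C := hsites i j j i hne
    have D := hsites j i i j hne'
    have swEE : ∀ w : H, Sp i j (Sp j i w) = Sp j i (Sp i j w) := sw C.1.eq
    have swHE' : ∀ w : H, Sz i j (Sp j i w) = Sp j i (Sz i j w) :=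
      sw D.2.2.1.symm.eq
    have swH'E : ∀ w : H, Sz j i (Sp i j w) = Sp i j (Sz j i w) :=
      sw C.2.2.1.symm.eq
    have swF'H : ∀ w : H, Sm i j (Sz i j w) = Sz i j (Sm i j w) :=
      sw D.2.2.2.2.1.eq
    have c1 : Sz i j (Sp j i v) = (-(1/2):ℂ) • Sp j i v := by
      rw [swHE', hz, map_smul]
    have c2 : Sz j i (Sp i j v) = (-(1/2):ℂ) • Sp i j v := by
      rw [swH'E, hz, map_smul]
    have hG : Sz i j (Sp i j (Sp j i v)) = (1/2:ℂ) • Sp i j (Sp j i v) := by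
      rw [hstepv i j, c1, map_smul]; module
    have h'G : Sz j i (Sp i j (Sp j i v)) = (1/2:ℂ) • Sp i j (Sp j i v) := by
      rw [swH'E, hev j i, map_smul]
    have hA1 : Sz i j (trSq Sp v)
        = (-(1/2):ℂ) • trSq Sp v + (2:ℂ) • Sp i j (Sp j i v) := by
      rw [appHA i j v, hz, map_smul, ← swEE v]; module
    have hA2 : Sz j i (trSq Sp v)
        = (-(1/2):ℂ) • trSq Sp v + (2:ℂ) • Sp i j (Sp j i v) := by
      rw [appHA j i v, hz, map_smul, ← swEE v]; module
    have hhA : Sz i j (Sz j i (trSq Sp v)) = (1/4:ℂ) • trSq Sp v := by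
      rw [hA2, map_add, map_smul, map_smul, hA1, hG]; module
    have h'hA : Sz j i (Sz i j (trSq Sp v)) = (1/4:ℂ) • trSq Sp v := by
      rw [hA1, map_add, map_smul, map_smul, hA2, h'G]; module
    have fA : Sm j i (trSq Sp v) = (2:ℂ) • Sp j i v := by
      rw [appFA i j v, hvac, map_zero, c1, hz, map_smul]; module
    have f'A : Sm i j (trSq Sp v) = (2:ℂ) • Sp i j v := by
      rw [appFA j i v, hvac, map_zero, c2, hz, map_smul]; module
    have T1 : Sm i j (trSq Sp (Sp j i v))
        = trSq Sp v - (2:ℂ) • Sp i j (Sp j i v) := by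
      rw [appFA j i (Sp j i v), fev j i, h'G, hev j i, map_smul]; module
    have step1 : Sm j i (trSq Sp (trSq Sp v))
        = (2:ℂ) • (trSq Sp (Sp j i v))
          - (2:ℂ) • (Sz i j (Sp j i (trSq Sp v)))
          - (2:ℂ) • (Sp j i (Sz i j (trSq Sp v))) := by
      rw [appFA i j (trSq Sp v), fA, map_smul]
    have f'E'A : Sm i j (Sp j i (trSq Sp v))
        = trSq Sp v - (2:ℂ) • Sp i j (Sp j i v) := by
      rw [fstepv j i, f'A, map_smul, hA2, ← swEE v]; module
    have U1 : Sm i j (Sz i j (Sp j i (trSq Sp v)))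
        = (-(1/2):ℂ) • trSq Sp v + Sp i j (Sp j i v) := by
      rw [swF'H, f'E'A, map_sub, map_smul, hA1, hG]; module
    have f'hA : Sm i j (Sz i j (trSq Sp v)) = Sp i j v := by
      rw [swF'H, f'A, map_smul, hev i j]; module
    have U2 : Sm i j (Sp j i (Sz i j (trSq Sp v)))
        = Sp i j (Sp j i v) - (1/2:ℂ) • trSq Sp v := by
      rw [fstepv j i, f'hA, h'hA, ← swEE v]; module
    rw [step1, map_sub, map_sub, map_smul, map_smul, map_smul, T1, U1, U2]
    module
  -- assemble
  have key : ∀ i j : Fin N, Sm i j (Sm j i (trSq Sp (trSq Sp v)))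
      = if i = j then (24:ℂ) • (Sp i j (Sp j i v))
        else (4:ℂ) • trSq Sp v - (8:ℂ) • (Sp i j (Sp j i v)) := by
    intro i j
    by_cases h : i = j
    · subst h; rw [if_pos rfl]; exact diag i
    · rw [if_neg h]; exact offd i j h
  have hSm : trSq Sm = ∑ i : Fin N, ∑ j : Fin N, Sm i j * Sm j i := rfl
  have expandL : (trSq Sm * trSq Sp * trSq Sp) v
      = ∑ i : Fin N, ∑ j : Fin N, Sm i j (Sm j i (trSq Sp (trSq Sp v))) := by
    calc (trSq Sm * trSq Sp * trSq Sp) v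
        = trSq Sm (trSq Sp (trSq Sp v)) := rfl
      _ = _ := by rw [hSm]; simp [LinearMap.sum_apply, Module.End.mul_apply]
  have hAv_expand : trSq Sp v = ∑ i : Fin N, ∑ j : Fin N, Sp i j (Sp j i v) := by
    simp [trSq, LinearMap.sum_apply, Module.End.mul_apply]
  have hD : (∑ i : Fin N, Sp i i * Sp i i) v = ∑ i : Fin N, Sp i i (Sp i i v) := by
    simp [LinearMap.sum_apply, Module.End.mul_apply]
  have split : ∀ i : Fin N,
      (∑ j : Fin N, if i = j then (24:ℂ) • (Sp i j (Sp j i v))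
        else (4:ℂ) • trSq Sp v - (8:ℂ) • (Sp i j (Sp j i v)))
      = (∑ j : Fin N, ((4:ℂ) • trSq Sp v - (8:ℂ) • (Sp i j (Sp j i v))))
        + ((32:ℂ) • (Sp i i (Sp i i v)) - (4:ℂ) • trSq Sp v) := by
    intro i
    have hrw : ∀ j : Fin N,
        (if i = j then (24:ℂ) • (Sp i j (Sp j i v))
          else (4:ℂ) • trSq Sp v - (8:ℂ) • (Sp i j (Sp j i v)))
        = ((4:ℂ) • trSq Sp v - (8:ℂ) • (Sp i j (Sp j i v)))
          + (if i = j then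
              (32:ℂ) • (Sp i j (Sp j i v)) - (4:ℂ) • trSq Sp v else 0) := by
      intro j
      by_cases h : i = j
      · rw [if_pos h, if_pos h]; module
      · rw [if_neg h, if_neg h, add_zero]
    rw [Finset.sum_congr rfl (fun j _ => hrw j), Finset.sum_add_distrib,
      Finset.sum_ite_eq]
    simp
  have main1 : (trSq Sm * trSq Sp * trSq Sp) v =
      ((4 * (N : ℂ) ^ 2 - 4 * N - 8) : ℂ) • (trSq Sp v) +
        (32 : ℂ) • ((∑ i : Fin N, Sp i i * Sp i i) v) := by
    rw [expandL]
    rw [Finset.sum_congr rfl (fun i _ =>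
      (Finset.sum_congr rfl (fun j _ => key i j)).trans (split i))]
    rw [Finset.sum_add_distrib]
    have c1 : ∑ i : Fin N, ∑ j : Fin N,
        ((4:ℂ) • trSq Sp v - (8:ℂ) • (Sp i j (Sp j i v)))
        = ((N:ℂ) * (N:ℂ) * 4) • trSq Sp v - (8:ℂ) • trSq Sp v := by
      simp only [Finset.sum_sub_distrib]
      rw [Finset.sum_const, Finset.sum_const, Finset.card_univ, Fintype.card_fin,
        ← Nat.cast_smul_eq_nsmul ℂ, ← Nat.cast_smul_eq_nsmul ℂ, smul_smul, smul_smul]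
      rw [← hAv_expand.symm]
      simp [Finset.smul_sum]
    have c2 : ∑ i : Fin N, ((32:ℂ) • (Sp i i (Sp i i v)) - (4:ℂ) • trSq Sp v)
        = (32:ℂ) • ((∑ i : Fin N, Sp i i * Sp i i) v)
          - ((N:ℂ) * 4) • trSq Sp v := by
      simp only [Finset.sum_sub_distrib]
      rw [Finset.sum_const, Finset.card_univ, Fintype.card_fin,
        ← Nat.cast_smul_eq_nsmul ℂ, smul_smul, hD, ← Finset.smul_sum]
    rw [c1, c2]
    module
  exact ⟨main1, fun h0 => by rw [main1]; simp [h0]⟩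
end
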